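/- Let M be the additive submonoid (ℕ₀ × {0}) ∪ (ℤ × ℕ) of ℤ². Then M is a Furstenberg monoid whose only atom is (1,0), but M is not quasi-atomic. -/
import Mathlib


/-- The submonoid `(ℕ₀ × {0}) ∪ (ℤ × ℕ)` of `ℤ²`. -/
def S6 : Set (ℤ × ℤ) := {v | (0 ≤ v.1 ∧ v.2 = 0) ∨ 0 < v.2}

/-- `u` is invertible in the set `S`. -/
def IsUnitInSet (S : Set (ℤ × ℤ)) (u : ℤ × ℤ) : Prop := u ∈ S ∧ -u ∈ S

/-- `a` is an atom of the set `S`. -/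
def IsAtomInSet (S : Set (ℤ × ℤ)) (a : ℤ × ℤ) : Prop :=
  a ∈ S ∧ ¬ IsUnitInSet S a ∧
    ∀ x ∈ S, ∀ y ∈ S, a = x + y → IsUnitInSet S x ∨ IsUnitInSet S y

/-- `b` is atomic in `S`: invertible or a sum of atoms. -/
def AtomicInSet (S : Set (ℤ × ℤ)) (b : ℤ × ℤ) : Prop :=
  IsUnitInSet S b ∨ b ∈ AddSubmonoid.closure {a | IsAtomInSet S a}

lemma unit_iff6 (u : ℤ × ℤ) : IsUnitInSet S6 u ↔ u = 0 := by
  constructor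
  · rintro ⟨h1, h2⟩
    simp only [S6, Set.mem_setOf_eq, Prod.fst_neg, Prod.snd_neg] at h1 h2
    rw [Prod.ext_iff]
    constructor <;> simp <;> omega
  · rintro rfl
    constructor <;> simp [S6]

lemma atom10 : IsAtomInSet S6 ((1 : ℤ), (0 : ℤ)) := by
  refine ⟨by simp [S6], ?_, ?_⟩
  · rw [unit_iff6]; simp
  · intro x hx y hy hxy
    have h1 : (1 : ℤ) = x.1 + y.1 := congrArg Prod.fst hxy
    have h2 : (0 : ℤ) = x.2 + y.2 := congrArg Prod.snd hxy
    simp only [S6, Set.mem_setOf_eq] at hx hy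
    have hx2 : x.2 = 0 := by omega
    have hy2 : y.2 = 0 := by omega
    have hx1 : 0 ≤ x.1 := by omega
    have hy1 : 0 ≤ y.1 := by omega
    have : x.1 = 0 ∨ y.1 = 0 := by omega
    rcases this with h | h
    · left; rw [unit_iff6, Prod.ext_iff]; constructor <;> simp <;> omega
    · right; rw [unit_iff6, Prod.ext_iff]; constructor <;> simp <;> omega

lemma atoms_eq : {a | IsAtomInSet S6 a} = {((1 : ℤ), (0 : ℤ))} := by
  ext a
  simp only [Set.mem_setOf_eq, Set.mem_singleton_iff]
  constructor
  · rintro ⟨haS, hanu, hmin⟩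
    rw [unit_iff6, Prod.ext_iff] at hanu
    simp only [Prod.fst_zero, Prod.snd_zero] at hanu
    simp only [S6, Set.mem_setOf_eq] at haS
    rcases haS with ⟨ha1, ha2⟩ | ha2
    · -- a.2 = 0, a.1 ≥ 1
      by_contra hne
      rw [Prod.ext_iff] at hne
      simp only at hne
      have ha1' : 2 ≤ a.1 := by
        rcases lt_or_ge a.1 2 with h | h
        · exfalso; apply hne; constructor <;> omega
        · exact h
      have := hmin ((1 : ℤ), (0 : ℤ)) (by simp [S6]) (a.1 - 1, 0)
        (by simp only [S6, Set.mem_setOf_eq]; left; constructor <;> simp <;> omega)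
        (by rw [Prod.ext_iff]; constructor <;> simp <;> omega)
      rcases this with h | h <;> rw [unit_iff6, Prod.ext_iff] at h <;>
        simp only [Prod.fst_zero, Prod.snd_zero] at h <;> omega
    · -- a.2 > 0 : not an atom
      exfalso
      have := hmin (a.1 - 1, a.2) (by simp only [S6, Set.mem_setOf_eq]; right; simpa)
        ((1 : ℤ), (0 : ℤ)) (by simp [S6])
        (by rw [Prod.ext_iff]; constructor <;> simp)
      rcases this with h | h <;> rw [unit_iff6, Prod.ext_iff] at h <;>
        simp only [Prod.fst_zero, Prod.snd_zero] at h <;> omega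
  · rintro rfl; exact atom10

/-- The submonoid of elements with second coordinate zero. -/
def K6 : AddSubmonoid (ℤ × ℤ) where
  carrier := {v | v.2 = 0}
  zero_mem' := rfl
  add_mem' := by
    intro a b ha hb
    simp only [Set.mem_setOf_eq, Prod.snd_add] at *
    omega

theorem stmt_6 :
    (∀ b ∈ S6, ¬ IsUnitInSet S6 b → ∃ a, IsAtomInSet S6 a ∧ b - a ∈ S6) ∧
    {a | IsAtomInSet S6 a} = {((1 : ℤ), (0 : ℤ))} ∧
    ¬ (∀ b ∈ S6, ∃ c ∈ S6, AtomicInSet S6 (b + c)) := by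
  refine ⟨?_, atoms_eq, ?_⟩
  · intro b hb hbu
    refine ⟨((1 : ℤ), (0 : ℤ)), atom10, ?_⟩
    rw [unit_iff6, Prod.ext_iff] at hbu
    simp only [Prod.fst_zero, Prod.snd_zero] at hbu
    simp only [S6, Set.mem_setOf_eq] at hb ⊢
    simp only [Prod.fst_sub, Prod.snd_sub]
    omega
  · intro h
    obtain ⟨c, hc, hat⟩ := h ((0 : ℤ), (1 : ℤ)) (by simp [S6])
    simp only [S6, Set.mem_setOf_eq] at hc
    have hsnd : ((0 : ℤ), (1 : ℤ)).2 + c.2 ≥ 1 := by simp; omega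
    rcases hat with hu | hcl
    · rw [unit_iff6, Prod.ext_iff] at hu
      simp only [Prod.fst_zero, Prod.snd_zero, Prod.fst_add, Prod.snd_add] at hu
      omega
    · rw [atoms_eq] at hcl
      have hle : AddSubmonoid.closure {((1 : ℤ), (0 : ℤ))} ≤ K6 := by
        rw [AddSubmonoid.closure_le]
        intro v hv
        simp only [Set.mem_singleton_iff] at hv
        subst hv
        rfl
      have := hle hcl
      simp only [K6, AddSubmonoid.mem_mk, AddSubsemigroup.mem_mk, Set.mem_setOf_eq,
        Prod.snd_add] at this
      simp at hsnd
      omega
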